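/- Let G be a locally finite group (every finitely generated subgroup of G is finite). Then the complex group algebra ℂ[G] is a Baer ring if and only if G is finite. -/

import Mathlib

/-- A Baer ring: the right annihilator of every nonempty subset is the principal right
ideal generated by an idempotent. -/
def IsBaerRing (A : Type*) [Mul A] [Zero A] : Prop :=
  ∀ S : Set A, S.Nonempty → ∃ e : A, e * e = e ∧
    {y : A | ∀ s ∈ S, s * y = 0} = {z : A | ∃ x : A, z = e * x}

noncomputable section

namespace BaerAux

open MonoidAlgebra

variable {G : Type*} [Group G]

/-- A finset which is the underlying set of a subgroup. -/
def IsSubgroupFinset (s : Finset G) : Prop :=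
  (1 : G) ∈ s ∧ (∀ a ∈ s, ∀ b ∈ s, a * b ∈ s) ∧ (∀ a ∈ s, a⁻¹ ∈ s)

/-- The standard anti-involution of a group algebra, `a ↦ (g ↦ a g⁻¹)`. -/
def iota (a : MonoidAlgebra ℂ G) : MonoidAlgebra ℂ G :=
  MonoidAlgebra.ofCoeff (Finsupp.equivMapDomain (Equiv.inv G) a.coeff)

lemma iota_single (g : G) (c : ℂ) : iota (single g c) = single g⁻¹ c := by
  rw [iota, MonoidAlgebra.coeff_single, Finsupp.equivMapDomain_single]; rfl

lemma iota_iota (a : MonoidAlgebra ℂ G) : iota (iota a) = a := by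
  have : (Equiv.inv G).trans (Equiv.inv G) = Equiv.refl G := by
    ext x; simp
  show MonoidAlgebra.ofCoeff (Finsupp.equivMapDomain _ (Finsupp.equivMapDomain _ a.coeff)) = a
  rw [← Finsupp.equivMapDomain_trans, this, Finsupp.equivMapDomain_refl]

lemma iota_add (a b : MonoidAlgebra ℂ G) : iota (a + b) = iota a + iota b := by
  ext x; exact Finsupp.add_apply (Finsupp.equivMapDomain (Equiv.inv G) a.coeff)
    (Finsupp.equivMapDomain (Equiv.inv G) b.coeff) x

lemma iota_zero : iota (0 : MonoidAlgebra ℂ G) = 0 := by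
  ext x; simp [iota, MonoidAlgebra.coeff_ofCoeff, Finsupp.equivMapDomain_apply]

lemma iota_mul (a b : MonoidAlgebra ℂ G) : iota (a * b) = iota b * iota a := by
  induction a using MonoidAlgebra.induction_linear with
  | zero => simp [iota_zero]
  | add a₁ a₂ h₁ h₂ => rw [add_mul, iota_add, h₁, h₂, iota_add, mul_add]
  | single g r =>
    induction b using MonoidAlgebra.induction_linear with
    | zero => simp [iota_zero]
    | add b₁ b₂ h₁ h₂ => rw [mul_add, iota_add, h₁, h₂, iota_add, add_mul]
    | single h s =>
      rw [MonoidAlgebra.single_mul_single, iota_single, iota_single, iota_single,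
        MonoidAlgebra.single_mul_single, mul_inv_rev, mul_comm s r]

lemma IsSubgroupFinset.mul_mem_iff {s : Finset G} (hs : IsSubgroupFinset s) {h : G}
    (hh : h ∈ s) (k : G) : k ∈ s ↔ h * k ∈ s := by
  constructor
  · intro hk; exact hs.2.1 h hh k hk
  · intro hk
    have := hs.2.1 h⁻¹ (hs.2.2 h hh) (h * k) hk
    rwa [inv_mul_cancel_left] at this

lemma IsSubgroupFinset.mem_mul_iff {s : Finset G} (hs : IsSubgroupFinset s) {h : G}
    (hh : h ∈ s) (k : G) : k ∈ s ↔ k * h ∈ s := by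
  constructor
  · intro hk; exact hs.2.1 k hk h hh
  · intro hk
    have := hs.2.1 (k * h) hk h⁻¹ (hs.2.2 h hh)
    rwa [mul_inv_cancel_right] at this

lemma grow (G : Type*) [Group G] [Infinite G]
    (hlf : ∀ H : Subgroup G, H.FG → Finite H) (s : Finset G) :
    ∃ t : Finset G, IsSubgroupFinset t ∧ s ⊂ t := by
  classical
  have hcl : ∀ u : Finset G, ((Subgroup.closure (u : Set G) : Subgroup G) : Set G).Finite := by
    intro u
    have hfg : (Subgroup.closure (u : Set G)).FG :=
      (Subgroup.fg_iff _).mpr ⟨u, rfl, u.finite_toSet⟩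
    have := hlf _ hfg
    exact Set.toFinite _
  obtain ⟨g, hg⟩ := ((hcl s).infinite_compl).nonempty
  refine ⟨(hcl (insert g s)).toFinset, ?_, ?_⟩
  · refine ⟨?_, ?_, ?_⟩
    · simp only [Set.Finite.mem_toFinset, SetLike.mem_coe]
      exact Subgroup.one_mem _
    · intro a ha b hb
      simp only [Set.Finite.mem_toFinset, SetLike.mem_coe] at *
      exact Subgroup.mul_mem _ ha hb
    · intro a ha
      simp only [Set.Finite.mem_toFinset, SetLike.mem_coe] at *
      exact Subgroup.inv_mem _ ha
  · constructor
    · intro x hx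
      simp only [Set.Finite.mem_toFinset, SetLike.mem_coe]
      exact Subgroup.subset_closure (by simp [hx])
    · intro hsub
      have hgs : g ∈ (hcl (insert g s)).toFinset := by
        simp only [Set.Finite.mem_toFinset, SetLike.mem_coe]
        exact Subgroup.subset_closure (by simp)
      have hgmem : g ∈ Subgroup.closure (s : Set G) :=
        Subgroup.subset_closure (Finset.mem_coe.mpr (hsub hgs))
      exact hg hgmem
    
lemma exists_chain (G : Type*) [Group G] [Infinite G]
    (hlf : ∀ H : Subgroup G, H.FG → Finite H) :
    ∃ K : ℕ → Finset G, (∀ n, IsSubgroupFinset (K n)) ∧ (∀ n, K n ⊂ K (n + 1)) := by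
  choose step h1 h2 using grow G hlf
  refine ⟨fun n => step^[n + 1] ∅, fun n => ?_, fun n => ?_⟩
  · show IsSubgroupFinset (step^[n + 1] ∅)
    rw [Function.iterate_succ_apply']
    exact h1 _
  · show step^[n + 1] ∅ ⊂ step^[n + 1 + 1] ∅
    rw [Function.iterate_succ_apply' step (n + 1)]
    exact h2 _

/-- The unnormalized sum of elements of a finset in the group algebra. -/
def Tsum (s : Finset G) : MonoidAlgebra ℂ G := ∑ h ∈ s, single h 1

lemma Tsum_mul_Tsum {s t : Finset G} (ht : IsSubgroupFinset t) (hst : s ⊆ t) :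
    Tsum s * Tsum t = s.card • Tsum t := by
  rw [Tsum, Tsum, Finset.sum_mul]
  rw [← Finset.sum_const]
  refine Finset.sum_congr rfl fun h hh => ?_
  rw [Finset.mul_sum]
  refine Finset.sum_equiv (Equiv.mulLeft h) (fun k => ?_) (fun k hk => ?_)
  · exact ht.mul_mem_iff (hst hh) k
  · rw [MonoidAlgebra.single_mul_single, mul_one]
    rfl

lemma Tsum_mul_Tsum' {s t : Finset G} (ht : IsSubgroupFinset t) (hst : s ⊆ t) :
    Tsum t * Tsum s = s.card • Tsum t := by
  rw [Tsum, Tsum, Finset.mul_sum]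
  rw [← Finset.sum_const]
  refine Finset.sum_congr rfl fun h hh => ?_
  rw [Finset.sum_mul]
  refine Finset.sum_equiv (Equiv.mulRight h) (fun k => ?_) (fun k hk => ?_)
  · exact ht.mem_mul_iff (hst hh) k
  · rw [MonoidAlgebra.single_mul_single, mul_one]
    rfl

lemma Tsum_mul_apply_one (s : Finset G) (a : MonoidAlgebra ℂ G) :
    (Tsum s * a).coeff 1 = ∑ h ∈ s, a.coeff h⁻¹ := by
  rw [Tsum, Finset.sum_mul]
  rw [MonoidAlgebra.coeff_sum, Finsupp.finset_sum_apply]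
  refine Finset.sum_congr rfl fun h hh => ?_
  rw [MonoidAlgebra.coeff_single_mul_apply, one_mul, mul_one]

lemma mul_Tsum_apply_one (s : Finset G) (a : MonoidAlgebra ℂ G) :
    (a * Tsum s).coeff 1 = ∑ h ∈ s, a.coeff h⁻¹ := by
  rw [Tsum, Finset.mul_sum]
  rw [MonoidAlgebra.coeff_sum, Finsupp.finset_sum_apply]
  refine Finset.sum_congr rfl fun h hh => ?_
  rw [MonoidAlgebra.coeff_mul_single_apply, one_mul, mul_one]

lemma Tsum_apply_one {s : Finset G} (h1 : (1 : G) ∈ s) : (Tsum s).coeff 1 = 1 := by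
  classical
  rw [Tsum, MonoidAlgebra.coeff_sum, Finsupp.finset_sum_apply]
  rw [Finset.sum_eq_single_of_mem 1 h1]
  · simp [MonoidAlgebra.coeff_single]
  · intro b _ hb
    simp [MonoidAlgebra.coeff_single, Finsupp.single_apply, hb]

lemma semisimple (G : Type*) [Group G] [Finite G] :
    IsSemisimpleRing (MonoidAlgebra ℂ G) := by
  obtain ⟨n, ⟨e⟩⟩ := Finite.exists_equiv_fin G
  letI : Group (Fin n) := (e.symm).group
  have hn : n ≠ 0 := by
    rintro rfl
    exact (e (1 : G)).elim0
  haveI : NeZero ((Fintype.card (Fin n) : ℂ)) := by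
    constructor
    simp only [Fintype.card_fin]
    exact_mod_cast hn
  haveI : IsSemisimpleRing (MonoidAlgebra ℂ (Fin n)) := inferInstance
  exact ((MonoidAlgebra.domCongr ℂ ℂ (e.symm.mulEquiv)).toRingEquiv).isSemisimpleRing

lemma isBaer_of_finite (G : Type*) [Group G] [Finite G] :
    ∀ S : Set (MonoidAlgebra ℂ G), S.Nonempty → ∃ e : MonoidAlgebra ℂ G, e * e = e ∧
      {y : MonoidAlgebra ℂ G | ∀ s ∈ S, s * y = 0}
        = {z : MonoidAlgebra ℂ G | ∃ x : MonoidAlgebra ℂ G, z = e * x} := by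
  haveI := semisimple G
  intro S _
  let J : Ideal (MonoidAlgebra ℂ G) :=
    { carrier := {w | ∀ s ∈ S, w * iota s = 0}
      add_mem' := by
        intro a b ha hb s hs
        rw [add_mul, ha s hs, hb s hs, add_zero]
      zero_mem' := by intro s hs; rw [zero_mul]
      smul_mem' := by
        intro c w hw s hs
        show (c * w) * iota s = 0
        rw [mul_assoc, hw s hs, mul_zero] }
  obtain ⟨f, hf, hJ⟩ := IsSemisimpleRing.ideal_eq_span_idempotent J
  have hfJ : f ∈ J := by rw [hJ]; exact Ideal.subset_span rfl
  refine ⟨iota f, ?_, ?_⟩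
  · rw [← iota_mul, hf]
  · ext y
    constructor
    · intro hy
      have hyJ : iota y ∈ J := by
        intro s hs
        rw [← iota_mul, hy s hs, iota_zero]
      rw [hJ, Ideal.mem_span_singleton'] at hyJ
      obtain ⟨b, hb⟩ := hyJ
      refine ⟨iota b, ?_⟩
      rw [← iota_mul, hb, iota_iota]
    · rintro ⟨x, rfl⟩ s hs
      have h1 : f * iota s = 0 := hfJ s hs
      have h2 : s * iota f = 0 := by
        have := congrArg iota h1
        rwa [iota_mul, iota_iota, iota_zero] at this
      rw [← mul_assoc, h2, zero_mul]

lemma MA_sub_apply {G : Type*} [Group G] (a b : MonoidAlgebra ℂ G) (x : G) :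
    (a - b).coeff x = a.coeff x - b.coeff x := Finsupp.sub_apply a.coeff b.coeff x

lemma not_baer_of_infinite (G : Type*) [Group G] [Infinite G]
    (hlf : ∀ H : Subgroup G, H.FG → Finite H) :
    ¬ (∀ S : Set (MonoidAlgebra ℂ G), S.Nonempty → ∃ e : MonoidAlgebra ℂ G, e * e = e ∧
        {y : MonoidAlgebra ℂ G | ∀ s ∈ S, s * y = 0}
          = {z : MonoidAlgebra ℂ G | ∃ x : MonoidAlgebra ℂ G, z = e * x}) := by
  intro hB
  classical
  obtain ⟨K, hKsub, hKlt⟩ := exists_chain G hlf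
  have hKmono : ∀ {m n : ℕ}, m ≤ n → K m ⊆ K n :=
    fun {m n} h => monotone_nat_of_le_succ (fun k => (hKlt k).subset) h
  have hcardmono : StrictMono fun n => (K n).card :=
    strictMono_nat_of_lt_succ fun n => Finset.card_lt_card (hKlt n)
  set c : ℕ → ℂ := fun n => ((K n).card : ℂ) with hc
  have hc0 : ∀ n, c n ≠ 0 := by
    intro n
    have hne : (K n).card ≠ 0 := Finset.card_ne_zero_of_mem (hKsub n).1
    show ((K n).card : ℂ) ≠ 0
    exact_mod_cast hne
  have hcne : ∀ {m n : ℕ}, m < n → c m ≠ c n := by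
    intro m n h hmn
    have : (K m).card = (K n).card := Nat.cast_injective hmn
    exact absurd this (ne_of_lt (hcardmono h))
  set E : ℕ → MonoidAlgebra ℂ G := fun n => (c n)⁻¹ • Tsum (K n) with hE
  have hEmul : ∀ {m n : ℕ}, m ≤ n → E m * E n = E n := by
    intro m n h
    show ((c m)⁻¹ • Tsum (K m)) * ((c n)⁻¹ • Tsum (K n)) = (c n)⁻¹ • Tsum (K n)
    rw [smul_mul_assoc, mul_smul_comm, Tsum_mul_Tsum (hKsub n) (hKmono h),
      ← Nat.cast_smul_eq_nsmul ℂ, smul_smul, smul_smul]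
    congr 1
    show (c m)⁻¹ * (c n)⁻¹ * ((K m).card : ℂ) = (c n)⁻¹
    rw [mul_comm ((c m)⁻¹) ((c n)⁻¹), mul_assoc, inv_mul_cancel₀ (hc0 m), mul_one]
  have hEmul' : ∀ {m n : ℕ}, m ≤ n → E n * E m = E n := by
    intro m n h
    show ((c n)⁻¹ • Tsum (K n)) * ((c m)⁻¹ • Tsum (K m)) = (c n)⁻¹ • Tsum (K n)
    rw [smul_mul_assoc, mul_smul_comm, Tsum_mul_Tsum' (hKsub n) (hKmono h),
      ← Nat.cast_smul_eq_nsmul ℂ, smul_smul, smul_smul]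
    congr 1
    show (c n)⁻¹ * (c m)⁻¹ * ((K m).card : ℂ) = (c n)⁻¹
    rw [mul_assoc, inv_mul_cancel₀ (hc0 m), mul_one]
  set p : ℕ → MonoidAlgebra ℂ G := fun n => E n - E (n + 1) with hp
  have horth : ∀ m n : ℕ, m ≠ n → p m * p n = 0 := by
    intro m n hmn
    show (E m - E (m + 1)) * (E n - E (n + 1)) = 0
    rcases lt_or_gt_of_ne hmn with h | h
    · rw [sub_mul, mul_sub, mul_sub, hEmul (le_of_lt h), hEmul (by omega),
        hEmul (by omega : m + 1 ≤ n), hEmul (by omega)]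
      abel
    · rw [sub_mul, mul_sub, mul_sub, hEmul' (le_of_lt h), hEmul' (by omega : n + 1 ≤ m),
        hEmul' (by omega), hEmul' (by omega)]
      abel
  obtain ⟨e, he, hann⟩ := hB (Set.range fun k => p (2 * k)) ⟨p 0, ⟨0, by norm_num⟩⟩
  have he_mem : e ∈ {y : MonoidAlgebra ℂ G | ∀ s ∈ Set.range fun k => p (2 * k), s * y = 0} := by
    rw [hann]; exact ⟨1, (mul_one e).symm⟩
  have h1 : ∀ k, p (2 * k) * e = 0 := fun k => he_mem _ ⟨k, rfl⟩
  have h2 : ∀ k, e * p (2 * k + 1) = p (2 * k + 1) := by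
    intro k
    have hm : p (2 * k + 1) ∈
        {y : MonoidAlgebra ℂ G | ∀ s ∈ Set.range fun j => p (2 * j), s * y = 0} := by
      rintro s ⟨j, rfl⟩
      exact horth _ _ (by omega)
    rw [hann] at hm
    obtain ⟨x, hx⟩ := hm
    rw [hx, ← mul_assoc, he]
  set σ : ℕ → ℂ := fun n => ∑ h ∈ K n, e.coeff h⁻¹ with hσ
  have hEa : ∀ (n : ℕ), (E n * e).coeff 1 = (c n)⁻¹ * σ n := by
    intro n
    show (((c n)⁻¹ • Tsum (K n)) * e).coeff 1 = (c n)⁻¹ * σ n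
    rw [smul_mul_assoc, MonoidAlgebra.coeff_smul_apply, Tsum_mul_apply_one, smul_eq_mul]
  have haE : ∀ (n : ℕ), (e * E n).coeff 1 = (c n)⁻¹ * σ n := by
    intro n
    show (e * ((c n)⁻¹ • Tsum (K n))).coeff 1 = (c n)⁻¹ * σ n
    rw [mul_smul_comm, MonoidAlgebra.coeff_smul_apply, mul_Tsum_apply_one, smul_eq_mul]
  have hE1 : ∀ n : ℕ, (E n).coeff 1 = (c n)⁻¹ := by
    intro n
    show ((c n)⁻¹ • Tsum (K n)).coeff 1 = (c n)⁻¹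
    rw [MonoidAlgebra.coeff_smul_apply, Tsum_apply_one (hKsub n).1, smul_eq_mul, mul_one]
  have eq1 : ∀ k, (c (2 * k))⁻¹ * σ (2 * k) - (c (2 * k + 1))⁻¹ * σ (2 * k + 1) = 0 := by
    intro k
    have := congrArg (fun f : MonoidAlgebra ℂ G => f.coeff 1) (h1 k)
    simp only [hp, sub_mul] at this
    rw [MA_sub_apply, hEa, hEa] at this
    simpa using this
  have eq2 : ∀ k, (c (2 * k + 1))⁻¹ * σ (2 * k + 1) - (c (2 * k + 1 + 1))⁻¹ * σ (2 * k + 1 + 1)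
      = (c (2 * k + 1))⁻¹ - (c (2 * k + 1 + 1))⁻¹ := by
    intro k
    have := congrArg (fun f : MonoidAlgebra ℂ G => f.coeff 1) (h2 k)
    simp only [hp, mul_sub] at this
    rw [MA_sub_apply, MA_sub_apply, haE, haE, hE1, hE1] at this
    exact this
  -- stabilization of σ
  set T₀ : Finset G := e.coeff.support.image (fun g => g⁻¹) with hT₀
  have hσ' : ∀ n, σ n = ∑ h ∈ K n ∩ T₀, e.coeff h⁻¹ := by
    intro n
    refine (Finset.sum_subset Finset.inter_subset_left ?_).symm
    intro h hh hnot
    by_contra habs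
    have hmem : h⁻¹ ∈ e.coeff.support := Finsupp.mem_support_iff.mpr habs
    have : h ∈ T₀ := by
      rw [hT₀]
      exact Finset.mem_image.mpr ⟨h⁻¹, hmem, inv_inv h⟩
    exact hnot (Finset.mem_inter.mpr ⟨hh, this⟩)
  set M : ℕ := T₀.sup (fun t => if h : ∃ n, t ∈ K n then Nat.find h else 0) with hM
  have hstab : ∀ m, M ≤ m → K m ∩ T₀ = K M ∩ T₀ := by
    intro m hm
    ext t
    simp only [Finset.mem_inter]
    constructor
    · rintro ⟨htm, htT⟩
      refine ⟨?_, htT⟩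
      have hex : ∃ n, t ∈ K n := ⟨m, htm⟩
      have hfind : Nat.find hex ≤ M := by
        have := Finset.le_sup (f := fun t => if h : ∃ n, t ∈ K n then Nat.find h else 0) htT
        simp only [dif_pos hex] at this
        rw [hM]
        exact this
      exact hKmono hfind (Nat.find_spec hex)
    · rintro ⟨htM, htT⟩
      exact ⟨hKmono hm htM, htT⟩
  have hσstab : ∀ m, M ≤ m → σ m = σ M := by
    intro m hm
    rw [hσ' m, hσ' M, hstab m hm]
  -- contradiction
  have e1 := eq1 M
  rw [hσstab (2 * M) (by omega), hσstab (2 * M + 1) (by omega), ← sub_mul] at e1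
  have hσM : σ M = 0 := by
    rcases mul_eq_zero.mp e1 with h | h
    · exfalso
      have : (c (2 * M))⁻¹ = (c (2 * M + 1))⁻¹ := sub_eq_zero.mp h
      exact hcne (by omega : 2 * M < 2 * M + 1) (inv_injective this)
    · exact h
  have e2 := eq2 M
  rw [hσstab (2 * M + 1) (by omega), hσstab (2 * M + 1 + 1) (by omega), hσM] at e2
  simp only [mul_zero, sub_zero] at e2
  have : (c (2 * M + 1))⁻¹ = (c (2 * M + 1 + 1))⁻¹ := by linear_combination -e2
  exact hcne (by omega : 2 * M + 1 < 2 * M + 1 + 1) (inv_injective this)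

end BaerAux

end

/-- For a locally finite group `G` (every finitely generated subgroup
is finite), the complex group algebra `ℂ[G]` is a Baer ring iff `G` is finite. -/

theorem groupAlgebra_baerRing_iff_finite_of_locallyFinite (G : Type*) [Group G]
    (hlf : ∀ H : Subgroup G, H.FG → Finite H) :
    IsBaerRing (MonoidAlgebra ℂ G) ↔ Finite G := by
  constructor
  · intro hB
    by_contra hfin
    haveI : Infinite G := not_finite_iff_infinite.mp hfin
    exact BaerAux.not_baer_of_infinite G hlf hB
  · intro hfin
    exact BaerAux.isBaer_of_finite G
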